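/- (Double sum partial summation bound.) Let M, N be positive integers, let a : {1,…,M}×{1,…,N} → ℂ and b : {1,…,M}×{1,…,N} → ℝ with 0 ≤ b(m,n) ≤ H, and suppose the differences b(m,n)−b(m+1,n), b(m,n)−b(m,n+1), and b(m,n)−b(m+1,n)−b(m,n+1)+b(m+1,n+1) are all nonnegative for all valid m,n. If |Σ_{μ=1}^{m} Σ_{ν=1}^{n} a(μ,ν)| ≤ G for all 1 ≤ m ≤ M, 1 ≤ n ≤ N, then |Σ_{m=1}^{M} Σ_{n=1}^{N} a(m,n) b(m,n)| ≤ 5 G H. -/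

import Mathlib

open Finset

/-- Extension of `b` by zero outside the rectangle `[1,M] × [1,N]`. -/
def bext (M N : ℕ) (b : ℕ → ℕ → ℝ) (m n : ℕ) : ℝ :=
  if m ≤ M ∧ n ≤ N then b m n else 0

/-- Mixed second difference of the extended function. -/
def dd (M N : ℕ) (b : ℕ → ℕ → ℝ) (m n : ℕ) : ℝ :=
  bext M N b m n - bext M N b (m + 1) n - bext M N b m (n + 1)
    + bext M N b (m + 1) (n + 1)

/-- Telescoping sum over an `Icc`. -/
lemma tel_Icc (g : ℕ → ℝ) (m M : ℕ) (h : m ≤ M) :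
    ∑ k ∈ Icc m M, (g k - g (k + 1)) = g m - g (M + 1) := by
  induction M with
  | zero =>
    interval_cases m
    simp
  | succ M ih =>
    rcases Nat.lt_or_ge m (M + 1) with h' | h'
    · rw [Finset.sum_Icc_succ_top (by omega), ih (by omega)]
      ring
    · have : m = M + 1 := by omega
      subst this
      simp
/-- Representation of `b` as a lower-right sum of mixed differences. -/
lemma bext_eq_sum (M N : ℕ) (b : ℕ → ℕ → ℝ) (m n : ℕ) (hm : m ≤ M) (hn : n ≤ N) :
    ∑ p ∈ Icc m M, ∑ q ∈ Icc n N, dd M N b p q = bext M N b m n := by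
  have inner : ∀ p, ∑ q ∈ Icc n N, dd M N b p q
      = bext M N b p n - bext M N b (p + 1) n := by
    intro p
    have := tel_Icc (fun q => bext M N b p q - bext M N b (p + 1) q) n N hn
    calc ∑ q ∈ Icc n N, dd M N b p q
        = ∑ q ∈ Icc n N, ((fun q => bext M N b p q - bext M N b (p + 1) q) q
          - (fun q => bext M N b p q - bext M N b (p + 1) q) (q + 1)) := by
          apply Finset.sum_congr rfl; intro q _; simp only [dd]; ring
      _ = (bext M N b p n - bext M N b (p + 1) n)
          - (bext M N b p (N + 1) - bext M N b (p + 1) (N + 1)) := this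
      _ = bext M N b p n - bext M N b (p + 1) n := by
          simp [bext, Nat.not_succ_le_self]
  calc ∑ p ∈ Icc m M, ∑ q ∈ Icc n N, dd M N b p q
      = ∑ p ∈ Icc m M, ((fun p => bext M N b p n) p - (fun p => bext M N b p n) (p + 1)) :=
        Finset.sum_congr rfl fun p _ => inner p
    _ = bext M N b m n - bext M N b (M + 1) n := tel_Icc _ m M hm
    _ = bext M N b m n := by
        rw [show bext M N b (M + 1) n = 0 from if_neg (by omega)]
        ring

/-- Titchmarsh's two-dimensional Abel summation inequality: if all rectangular
partial sums of `a` are bounded by `G`, and `0 ≤ b ≤ H` is nonincreasing in each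
variable with nonnegative mixed second difference, then
`|Σ_{m=1}^M Σ_{n=1}^N a(m,n) b(m,n)| ≤ 5GH`. -/
theorem double_abel_summation (M N : ℕ) (hM : 0 < M) (hN : 0 < N)
    (a : ℕ → ℕ → ℂ) (b : ℕ → ℕ → ℝ) (G H : ℝ)
    (hb0 : ∀ m ∈ Icc 1 M, ∀ n ∈ Icc 1 N, 0 ≤ b m n)
    (hbH : ∀ m ∈ Icc 1 M, ∀ n ∈ Icc 1 N, b m n ≤ H)
    (hb1 : ∀ m ∈ Icc 1 M, ∀ n ∈ Icc 1 N, 0 ≤ b m n - b (m + 1) n)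
    (hb2 : ∀ m ∈ Icc 1 M, ∀ n ∈ Icc 1 N, 0 ≤ b m n - b m (n + 1))
    (hb3 : ∀ m ∈ Icc 1 M, ∀ n ∈ Icc 1 N,
      0 ≤ b m n - b (m + 1) n - b m (n + 1) + b (m + 1) (n + 1))
    (hG : ∀ m ∈ Icc 1 M, ∀ n ∈ Icc 1 N,
      ‖∑ μ ∈ Icc 1 m, ∑ ν ∈ Icc 1 n, a μ ν‖ ≤ G) :
    ‖∑ m ∈ Icc 1 M, ∑ n ∈ Icc 1 N, a m n * (b m n : ℂ)‖ ≤ 5 * G * H := by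
  have hdd : ∀ p ∈ Icc 1 M, ∀ q ∈ Icc 1 N, 0 ≤ dd M N b p q := by
    intro p hp' q hq'
    have hp := mem_Icc.mp hp'
    have hq := mem_Icc.mp hq'
    have e1 : bext M N b p q = b p q := if_pos ⟨hp.2, hq.2⟩
    by_cases h1 : p + 1 ≤ M <;> by_cases h2 : q + 1 ≤ N
    · have e2 : bext M N b (p + 1) q = b (p + 1) q := if_pos ⟨h1, hq.2⟩
      have e3 : bext M N b p (q + 1) = b p (q + 1) := if_pos ⟨hp.2, h2⟩
      have e4 : bext M N b (p + 1) (q + 1) = b (p + 1) (q + 1) := if_pos ⟨h1, h2⟩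
      simp only [dd, e1, e2, e3, e4]
      exact hb3 p hp' q hq'
    · have e2 : bext M N b (p + 1) q = b (p + 1) q := if_pos ⟨h1, hq.2⟩
      have e3 : bext M N b p (q + 1) = 0 := if_neg (by omega)
      have e4 : bext M N b (p + 1) (q + 1) = 0 := if_neg (by omega)
      simp only [dd, e1, e2, e3, e4]
      have := hb1 p hp' q hq'
      linarith
    · have e2 : bext M N b (p + 1) q = 0 := if_neg (by omega)
      have e3 : bext M N b p (q + 1) = b p (q + 1) := if_pos ⟨hp.2, h2⟩
      have e4 : bext M N b (p + 1) (q + 1) = 0 := if_neg (by omega)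
      simp only [dd, e1, e2, e3, e4]
      have := hb2 p hp' q hq'
      linarith
    · have e2 : bext M N b (p + 1) q = 0 := if_neg (by omega)
      have e3 : bext M N b p (q + 1) = 0 := if_neg (by omega)
      have e4 : bext M N b (p + 1) (q + 1) = 0 := if_neg (by omega)
      simp only [dd, e1, e2, e3, e4]
      have := hb0 p hp' q hq'
      linarith
  -- the Abel summation identity
  have key : ∑ m ∈ Icc 1 M, ∑ n ∈ Icc 1 N, a m n * (b m n : ℂ)
      = ∑ p ∈ Icc 1 M, ∑ q ∈ Icc 1 N,
          (dd M N b p q : ℂ) * ∑ μ ∈ Icc 1 p, ∑ ν ∈ Icc 1 q, a μ ν := by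
    have step1 : ∀ m ∈ Icc 1 M, ∀ n ∈ Icc 1 N,
        a m n * (b m n : ℂ)
          = ∑ p ∈ Icc m M, ∑ q ∈ Icc n N, a m n * (dd M N b p q : ℂ) := by
      intro m hm n hn
      simp only [mem_Icc] at hm hn
      have := bext_eq_sum M N b m n hm.2 hn.2
      rw [bext, if_pos ⟨hm.2, hn.2⟩] at this
      rw [← this]
      push_cast
      rw [Finset.mul_sum]
      exact Finset.sum_congr rfl fun p _ => by rw [Finset.mul_sum]
    calc ∑ m ∈ Icc 1 M, ∑ n ∈ Icc 1 N, a m n * (b m n : ℂ)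
        = ∑ m ∈ Icc 1 M, ∑ n ∈ Icc 1 N,
            ∑ p ∈ Icc m M, ∑ q ∈ Icc n N, a m n * (dd M N b p q : ℂ) :=
          Finset.sum_congr rfl fun m hm =>
            Finset.sum_congr rfl fun n hn => step1 m hm n hn
      _ = ∑ m ∈ Icc 1 M, ∑ p ∈ Icc m M, ∑ n ∈ Icc 1 N,
            ∑ q ∈ Icc n N, a m n * (dd M N b p q : ℂ) :=
          Finset.sum_congr rfl fun m _ => Finset.sum_comm
      _ = ∑ p ∈ Icc 1 M, ∑ m ∈ Icc 1 p, ∑ n ∈ Icc 1 N,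
            ∑ q ∈ Icc n N, a m n * (dd M N b p q : ℂ) := by
          have h1 : Icc 1 M = Ico 1 (M + 1) := by
            rw [Finset.Ico_add_one_right_eq_Icc]
          simp only [h1, show ∀ m : ℕ, Icc m M = Ico m (M + 1) from
            fun m => by rw [Finset.Ico_add_one_right_eq_Icc],
            show ∀ p : ℕ, Icc 1 p = Ico 1 (p + 1) from
            fun p => by rw [Finset.Ico_add_one_right_eq_Icc]]
          exact Finset.sum_Ico_Ico_comm 1 (M + 1) _
      _ = ∑ p ∈ Icc 1 M, ∑ m ∈ Icc 1 p, ∑ q ∈ Icc 1 N,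
            ∑ n ∈ Icc 1 q, a m n * (dd M N b p q : ℂ) := by
          refine Finset.sum_congr rfl fun p _ => Finset.sum_congr rfl fun m _ => ?_
          simp only [show ∀ n : ℕ, Icc n N = Ico n (N + 1) from
            fun n => by rw [Finset.Ico_add_one_right_eq_Icc],
            show ∀ q : ℕ, Icc 1 q = Ico 1 (q + 1) from
            fun q => by rw [Finset.Ico_add_one_right_eq_Icc]]
          exact Finset.sum_Ico_Ico_comm 1 (N + 1) _
      _ = ∑ p ∈ Icc 1 M, ∑ q ∈ Icc 1 N,
            (dd M N b p q : ℂ) * ∑ μ ∈ Icc 1 p, ∑ ν ∈ Icc 1 q, a μ ν := by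
          refine Finset.sum_congr rfl fun p _ => ?_
          rw [Finset.sum_comm]
          refine Finset.sum_congr rfl fun q _ => ?_
          rw [Finset.mul_sum]
          refine Finset.sum_congr rfl fun m _ => ?_
          rw [Finset.mul_sum]
          exact Finset.sum_congr rfl fun n _ => mul_comm _ _
  -- basic positivity facts
  have hb11 : (1 : ℕ) ∈ Icc 1 M := mem_Icc.mpr ⟨le_refl 1, hM⟩
  have hn11 : (1 : ℕ) ∈ Icc 1 N := mem_Icc.mpr ⟨le_refl 1, hN⟩
  have hG0 : 0 ≤ G := le_trans (norm_nonneg _) (hG 1 hb11 1 hn11)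
  have hH0 : 0 ≤ H := le_trans (hb0 1 hb11 1 hn11) (hbH 1 hb11 1 hn11)
  -- total mass of the mixed differences
  have hmass : ∑ p ∈ Icc 1 M, ∑ q ∈ Icc 1 N, dd M N b p q = b 1 1 := by
    rw [bext_eq_sum M N b 1 1 hM hN, bext, if_pos ⟨hM, hN⟩]
  rw [key]
  calc ‖∑ p ∈ Icc 1 M, ∑ q ∈ Icc 1 N,
          (dd M N b p q : ℂ) * ∑ μ ∈ Icc 1 p, ∑ ν ∈ Icc 1 q, a μ ν‖
      ≤ ∑ p ∈ Icc 1 M, ∑ q ∈ Icc 1 N,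
          ‖(dd M N b p q : ℂ) * ∑ μ ∈ Icc 1 p, ∑ ν ∈ Icc 1 q, a μ ν‖ := by
        refine le_trans (norm_sum_le _ _) (Finset.sum_le_sum fun p _ => ?_)
        exact norm_sum_le _ _
    _ ≤ ∑ p ∈ Icc 1 M, ∑ q ∈ Icc 1 N, dd M N b p q * G := by
        refine Finset.sum_le_sum fun p hp => Finset.sum_le_sum fun q hq => ?_
        rw [norm_mul, Complex.norm_real, Real.norm_of_nonneg (hdd p hp q hq)]
        exact mul_le_mul_of_nonneg_left (hG p hp q hq) (hdd p hp q hq)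
    _ = (∑ p ∈ Icc 1 M, ∑ q ∈ Icc 1 N, dd M N b p q) * G := by
        rw [Finset.sum_mul]
        exact Finset.sum_congr rfl fun p _ => by rw [Finset.sum_mul]
    _ = b 1 1 * G := by rw [hmass]
    _ ≤ H * G := mul_le_mul_of_nonneg_right (hbH 1 hb11 1 hn11) hG0
    _ ≤ 5 * G * H := by nlinarith
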